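/- Let Σ = YX†XYᵀ have full singular value decomposition Σ = UΛUᵀ with distinct positive singular values σ₁ > ... > σ_r of multiplicities m₁, ..., m_r. Suppose A₂ = UVC where C is invertible and V = [diag(V₁,...,V_r, V̄), 0] with each Vᵢ ∈ ℝ^{mᵢ×pᵢ} and V̄ having orthonormal columns (V̄ in the zero-singular-value block). Then Tr(A₂A₂† Σ) = Σᵢ₌₁ʳ pᵢ σᵢ. -/

import Mathlib

open Matrix

/-- `B` satisfies the four Penrose conditions for `A`, i.e. `B = A†`. -/
def Matrix.IsMoorePenrose {m n : Type*} [Fintype m] [Fintype n]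
    (A : Matrix m n ℝ) (B : Matrix n m ℝ) : Prop :=
  A * B * A = A ∧ B * A * B = B ∧ (A * B)ᵀ = A * B ∧ (B * A)ᵀ = B * A

/-- If Σ = YX†XYᵀ = UΛUᵀ with singular values σ₁ > ⋯ > σ_r > 0 of multiplicities
m₁,…,m_r (and m̄ zeros), and A₂ = UVC with C invertible and
V = [diag(V₁,…,V_r,V̄), 0] with orthonormal-column blocks Vᵢ ∈ ℝ^{mᵢ×pᵢ},
then Tr(A₂A₂†Σ) = Σᵢ pᵢσᵢ.  Rows/columns are indexed by the structured types
`R` and `Cc` encoding the block pattern. -/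
theorem trace_proj_sigma_eq_sum (r mbar pbar z d₀ mm : ℕ)
    (mfun pfun : Fin r → ℕ) (hp : ∀ i, pfun i ≤ mfun i) (hpbar : pbar ≤ mbar)
    (σ : Fin r → ℝ) (hσ : StrictAnti σ) (hσpos : ∀ i, 0 < σ i)
    (Vb : ∀ i : Fin r, Matrix (Fin (mfun i)) (Fin (pfun i)) ℝ)
    (hVb : ∀ i, (Vb i)ᵀ * Vb i = 1)
    (Vbar : Matrix (Fin mbar) (Fin pbar) ℝ) (hVbar : Vbarᵀ * Vbar = 1)
    (V : Matrix ((Σ i : Fin r, Fin (mfun i)) ⊕ Fin mbar)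
                ((Σ i : Fin r, Fin (pfun i)) ⊕ (Fin pbar ⊕ Fin z)) ℝ)
    (hV : V = fun x y =>
      match x, y with
      | Sum.inl ⟨i, a⟩, Sum.inl ⟨j, c⟩ =>
          if h : j = i then Vb i a (Fin.cast (congrArg pfun h) c) else 0
      | Sum.inr a, Sum.inr (Sum.inl c) => Vbar a c
      | _, _ => 0)
    (Λ : Matrix ((Σ i : Fin r, Fin (mfun i)) ⊕ Fin mbar)
                ((Σ i : Fin r, Fin (mfun i)) ⊕ Fin mbar) ℝ)
    (hΛ : Λ = Matrix.diagonal
      (Sum.elim (fun x : Σ i : Fin r, Fin (mfun i) => σ x.1) (fun _ => (0 : ℝ))))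
    (U : Matrix ((Σ i : Fin r, Fin (mfun i)) ⊕ Fin mbar)
                ((Σ i : Fin r, Fin (mfun i)) ⊕ Fin mbar) ℝ)
    (hU₁ : Uᵀ * U = 1) (hU₂ : U * Uᵀ = 1)
    (C Cinv : Matrix ((Σ i : Fin r, Fin (pfun i)) ⊕ (Fin pbar ⊕ Fin z))
                     ((Σ i : Fin r, Fin (pfun i)) ⊕ (Fin pbar ⊕ Fin z)) ℝ)
    (hC₁ : C * Cinv = 1) (hC₂ : Cinv * C = 1)
    (X : Matrix (Fin d₀) (Fin mm) ℝ)
    (Y : Matrix ((Σ i : Fin r, Fin (mfun i)) ⊕ Fin mbar) (Fin mm) ℝ)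
    (Xp : Matrix (Fin mm) (Fin d₀) ℝ) (hXp : X.IsMoorePenrose Xp)
    (hSVD : Y * Xp * X * Yᵀ = U * Λ * Uᵀ)
    (A₂p : Matrix ((Σ i : Fin r, Fin (pfun i)) ⊕ (Fin pbar ⊕ Fin z))
                  ((Σ i : Fin r, Fin (mfun i)) ⊕ Fin mbar) ℝ)
    (hA₂p : (U * V * C).IsMoorePenrose A₂p) :
    ((U * V * C) * A₂p * (Y * Xp * X * Yᵀ)).trace
      = ∑ i : Fin r, (pfun i : ℝ) * σ i := by
  classical
  obtain ⟨h1, h2, h3, h4⟩ := hA₂p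
  -- the diagonal 0/1 pattern of VᵀV
  set e : ((Σ i : Fin r, Fin (pfun i)) ⊕ (Fin pbar ⊕ Fin z)) → ℝ :=
    Sum.elim (fun _ => (1:ℝ)) (Sum.elim (fun _ => (1:ℝ)) (fun _ => (0:ℝ))) with he
  have hVll : ∀ (i : Fin r) (a : Fin (mfun i)) (j : Fin r) (c : Fin (pfun j)),
      V (Sum.inl ⟨i,a⟩) (Sum.inl ⟨j,c⟩)
        = if h : j = i then Vb i a (Fin.cast (congrArg pfun h) c) else 0 := by
    subst hV; intros; rfl
  have hVlr : ∀ (i : Fin r) (a : Fin (mfun i)) (c : Fin pbar),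
      V (Sum.inl ⟨i,a⟩) (Sum.inr (Sum.inl c)) = 0 := by subst hV; intros; rfl
  have hVrl : ∀ (a : Fin mbar) (j : Fin r) (c : Fin (pfun j)),
      V (Sum.inr a) (Sum.inl ⟨j,c⟩) = 0 := by subst hV; intros; rfl
  have hVrr : ∀ (a : Fin mbar) (c : Fin pbar),
      V (Sum.inr a) (Sum.inr (Sum.inl c)) = Vbar a c := by subst hV; intros; rfl
  have hVz : ∀ x (y : Fin z), V x (Sum.inr (Sum.inr y)) = 0 := by
    subst hV; rintro (⟨i,a⟩|a) y <;> rfl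
  have hVtV : Vᵀ * V = Matrix.diagonal e := by
    ext x y
    rw [Matrix.mul_apply, Fintype.sum_sum_type]
    rcases x with ⟨j,c⟩ | (x|x) <;> rcases y with ⟨j',c'⟩ | (y|y)
    · simp only [Matrix.transpose_apply, hVrl, zero_mul, mul_zero,
        Finset.sum_const_zero, add_zero]
      rw [← Finset.univ_sigma_univ, Finset.sum_sigma]
      by_cases hjj : j = j'
      · subst hjj
        have h1 := congrFun (congrFun (hVb j) c) c'
        rw [Matrix.mul_apply] at h1
        simp only [Matrix.transpose_apply] at h1
        have hrhs : Matrix.diagonal e (Sum.inl ⟨j,c⟩) (Sum.inl ⟨j,c'⟩)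
            = if c = c' then (1:ℝ) else 0 := by
          rcases eq_or_ne c c' with h | h
          · subst h; simp [he]
          · rw [Matrix.diagonal_apply_ne, if_neg h]
            simp [Sigma.mk.inj_iff, h]
        rw [hrhs]
        have hterm : ∀ i : Fin r,
            (∑ a : Fin (mfun i), V (Sum.inl ⟨i,a⟩) (Sum.inl ⟨j,c⟩)
              * V (Sum.inl ⟨i,a⟩) (Sum.inl ⟨j,c'⟩))
            = if i = j then ∑ a : Fin (mfun j), Vb j a c * Vb j a c' else 0 := by
          intro i
          rcases eq_or_ne i j with h | h
          · subst h
            simp [hVll]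
          · have h' : ¬ (j = i) := fun h' => h h'.symm
            simp [hVll, h', h]
        rw [Finset.sum_congr rfl fun i _ => hterm i, Fintype.sum_ite_eq']
        simpa [Matrix.one_apply] using h1
      · have hrhs : Matrix.diagonal e (Sum.inl ⟨j,c⟩) (Sum.inl ⟨j',c'⟩) = 0 := by
          rw [Matrix.diagonal_apply_ne]
          simp [Sigma.mk.inj_iff, hjj]
        rw [hrhs]
        refine Finset.sum_eq_zero fun i _ => Finset.sum_eq_zero fun a _ => ?_
        rcases eq_or_ne i j with h | h
        · subst h
          have h' : ¬ (j' = i) := fun h'' => hjj h''.symm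
          simp [hVll, h']
        · have h' : ¬ (j = i) := fun h' => h h'.symm
          simp [hVll, h']
    · simp [hVll, hVlr, hVrl, hVrr, Matrix.diagonal_apply]
    · simp [hVll, hVz, hVrl, Matrix.diagonal_apply]
    · simp [hVlr, hVrl, hVrr, Matrix.diagonal_apply]
    · have h1 := congrFun (congrFun hVbar x) y
      rw [Matrix.mul_apply] at h1
      simp only [Matrix.transpose_apply] at h1
      simp only [Matrix.transpose_apply, hVlr, hVrr, zero_mul,
        Finset.sum_const_zero, zero_add]
      rw [h1]
      rcases eq_or_ne x y with h | h
      · subst h; simp [Matrix.one_apply, he]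
      · rw [Matrix.one_apply_ne h, Matrix.diagonal_apply_ne]
        simp [h]
    · simp [hVlr, hVrr, hVz, Matrix.diagonal_apply]
    · simp [hVz, hVll, hVrl, Matrix.diagonal_apply]
    · simp [hVz, hVlr, hVrr, Matrix.diagonal_apply]
    · simp [hVz, he, Matrix.diagonal_apply]
  have hVzero : ∀ x y, V x (Sum.inr (Sum.inr y)) = 0 := by
    subst hV; rintro (⟨i,a⟩|a) y <;> rfl
  have key : V * (Vᵀ * V) = V := by
    rw [hVtV]
    ext x y
    rw [Matrix.mul_diagonal]
    rcases y with y | y | y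
    · simp [he]
    · simp [he]
    · simp [he, hVzero]
  have keyM : ∀ {κ : Type} [Fintype κ] (M : Matrix ((Σ i : Fin r, Fin (pfun i)) ⊕ (Fin pbar ⊕ Fin z)) κ ℝ),
      V * (Vᵀ * (V * M)) = V * M := by
    intro κ _ M
    rw [← Matrix.mul_assoc, ← Matrix.mul_assoc, Matrix.mul_assoc V Vᵀ V, key]
  have hUU : ∀ {κ : Type} [Fintype κ] (M : Matrix ((Σ i : Fin r, Fin (mfun i)) ⊕ Fin mbar) κ ℝ), Uᵀ * (U * M) = M := by
    intro κ _ M; rw [← Matrix.mul_assoc, hU₁, Matrix.one_mul]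
  have hCC : ∀ {κ : Type} [Fintype κ] (M : Matrix ((Σ i : Fin r, Fin (pfun i)) ⊕ (Fin pbar ⊕ Fin z)) κ ℝ), C * (Cinv * M) = M := by
    intro κ _ M; rw [← Matrix.mul_assoc, hC₁, Matrix.one_mul]
  set A := U * V * C with hAdef
  set Q := U * (V * Vᵀ) * Uᵀ with hQdef
  have hQA : Q * A = A := by
    rw [hQdef, hAdef]
    simp only [Matrix.mul_assoc]
    rw [hUU, keyM]
  have hQalt : Q = A * (Cinv * (Vᵀ * Uᵀ)) := by
    rw [hQdef, hAdef]
    simp only [Matrix.mul_assoc]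
    rw [hCC]
  have hQsymm : Qᵀ = Q := by
    rw [hQdef]
    simp only [Matrix.transpose_mul, Matrix.transpose_transpose, Matrix.mul_assoc]
  have e2 : (A * A₂p) * Q = Q := by
    calc (A * A₂p) * Q = (A * A₂p * A) * (Cinv * (Vᵀ * Uᵀ)) := by
          rw [hQalt]; simp only [Matrix.mul_assoc]
      _ = A * (Cinv * (Vᵀ * Uᵀ)) := by rw [h1]
      _ = Q := hQalt.symm
  have e1 : Q * (A * A₂p) = A * A₂p := by
    rw [← Matrix.mul_assoc, hQA]
  have hPQ : A * A₂p = Q := by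
    calc A * A₂p = (A * A₂p)ᵀ := h3.symm
      _ = (Q * (A * A₂p))ᵀ := by rw [e1]
      _ = (A * A₂p)ᵀ * Qᵀ := by rw [Matrix.transpose_mul]
      _ = (A * A₂p) * Q := by rw [h3, hQsymm]
      _ = Q := e2
  rw [hSVD, hPQ, hΛ, hQdef]
  set d : ((Σ i : Fin r, Fin (mfun i)) ⊕ Fin mbar) → ℝ :=
    Sum.elim (fun x : Σ i : Fin r, Fin (mfun i) => σ x.1) (fun _ => (0:ℝ)) with hd
  have step1 : U * (V * Vᵀ) * Uᵀ * (U * Matrix.diagonal d * Uᵀ)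
      = U * ((V * Vᵀ) * Matrix.diagonal d) * Uᵀ := by
    simp only [Matrix.mul_assoc]
    rw [hUU]
  rw [step1]
  have step2 : (U * ((V * Vᵀ) * Matrix.diagonal d) * Uᵀ).trace
      = (Matrix.diagonal d * (V * Vᵀ)).trace := by
    rw [Matrix.trace_mul_cycle, ← Matrix.mul_assoc, hU₁, Matrix.one_mul,
      Matrix.trace_mul_comm]
  rw [step2]
  have hblock : ∀ i : Fin r, ∑ a : Fin (mfun i),
      (V * Vᵀ) (Sum.inl ⟨i,a⟩) (Sum.inl ⟨i,a⟩) = (pfun i : ℝ) := by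
    intro i
    have hent : ∀ a : Fin (mfun i), (V * Vᵀ) (Sum.inl ⟨i,a⟩) (Sum.inl ⟨i,a⟩)
        = ∑ c : Fin (pfun i), Vb i a c * Vb i a c := by
      intro a
      rw [Matrix.mul_apply]
      simp only [Matrix.transpose_apply, Fintype.sum_sum_type, hVlr, hVz,
        mul_zero, zero_mul, Finset.sum_const_zero, add_zero]
      rw [← Finset.univ_sigma_univ, Finset.sum_sigma]
      have hterm : ∀ j : Fin r, (∑ c : Fin (pfun j),
          V (Sum.inl ⟨i,a⟩) (Sum.inl ⟨j,c⟩) * V (Sum.inl ⟨i,a⟩) (Sum.inl ⟨j,c⟩))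
          = if j = i then ∑ c : Fin (pfun i), Vb i a c * Vb i a c else 0 := by
        intro j
        rcases eq_or_ne j i with h | h
        · subst h; simp [hVll]
        · simp [hVll, h]
      rw [Finset.sum_congr rfl fun j _ => hterm j, Fintype.sum_ite_eq']
    rw [Finset.sum_congr rfl fun a _ => hent a, Finset.sum_comm]
    have h2 : ∀ c : Fin (pfun i),
        (∑ a : Fin (mfun i), Vb i a c * Vb i a c) = 1 := by
      intro c
      have := congrFun (congrFun (hVb i) c) c
      rw [Matrix.mul_apply] at this
      simp only [Matrix.transpose_apply] at this
      simpa [Matrix.one_apply] using this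
    rw [Finset.sum_congr rfl fun c _ => h2 c]
    simp
  have htr : (Matrix.diagonal d * (V * Vᵀ)).trace
      = ∑ x, d x * (V * Vᵀ) x x := by
    simp [Matrix.trace, Matrix.diag, Matrix.diagonal_mul]
  rw [htr, Fintype.sum_sum_type]
  have hz : ∑ x : Fin mbar,
      d (Sum.inr x) * (V * Vᵀ) (Sum.inr x) (Sum.inr x) = 0 := by simp [hd]
  rw [hz, add_zero, ← Finset.univ_sigma_univ, Finset.sum_sigma]
  refine Finset.sum_congr rfl fun i _ => ?_
  have hdσ : ∀ a : Fin (mfun i), d (Sum.inl ⟨i,a⟩) = σ i := fun a => rfl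
  calc (∑ a : Fin (mfun i),
        d (Sum.inl ⟨i,a⟩) * (V * Vᵀ) (Sum.inl ⟨i,a⟩) (Sum.inl ⟨i,a⟩))
      = σ i * ∑ a : Fin (mfun i), (V * Vᵀ) (Sum.inl ⟨i,a⟩) (Sum.inl ⟨i,a⟩) := by
        rw [Finset.mul_sum]
        exact Finset.sum_congr rfl fun a _ => by rw [hdσ a, mul_comm]
    _ = σ i * (pfun i : ℝ) := by rw [hblock i]
    _ = (pfun i : ℝ) * σ i := mul_comm _ _
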